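/- Let K ⊆ G be a compact subgroup and let h be a Γ-equivariant continuous hermitian metric which is right-K-invariant, i.e. h(gk)(v, w) = h(g)(v, w) for all g ∈ G, k ∈ K, v, w ∈ V. Let F ⊆ G be a measurable fundamental domain for the left translation action of Γ on G. Then for every k ∈ K and every continuous Γ-equivariant function f : G → V one has ∫_F h(x)(f(xk), f(xk)) dμ(x) = ∫_F h(x)(f(x), f(x)) dμ(x); that is, the right translation operators R(k), k ∈ K, are isometries for the L²-norm of Γ-equivariant functions. -/

import Mathlib

open MeasureTheory

/-- A `Γ`-equivariant continuous hermitian metric on the trivial `V`-bundle over `G`: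
a continuous assignment `g ↦ h g` of a hermitian inner product on `V`
(conjugate-linear in the first variable, linear in the second) satisfying
`h (γ * g) (χ γ v) (χ γ w) = h g v w`. -/
def IsEquivariantHermitianMetric {G V : Type*} [Group G] [TopologicalSpace G]
    [NormedAddCommGroup V] [NormedSpace ℂ V]
    (Γ : Subgroup G) (χ : Γ →* (V →ₗ[ℂ] V)ˣ) (h : G → V → V → ℂ) : Prop :=
  Continuous (fun p : G × V × V => h p.1 p.2.1 p.2.2) ∧
  (∀ (g : G) (v w w' : V), h g v (w + w') = h g v w + h g v w') ∧
  (∀ (g : G) (a : ℂ) (v w : V), h g v (a • w) = a * h g v w) ∧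
  (∀ (g : G) (v w : V), h g w v = (starRingEnd ℂ) (h g v w)) ∧
  (∀ (g : G) (v : V), v ≠ 0 → 0 < (h g v v).re) ∧
  (∀ (γ : Γ) (g : G) (v w : V),
    h ((γ : G) * g) ((χ γ : V →ₗ[ℂ] V) v) ((χ γ : V →ₗ[ℂ] V) w) = h g v w)

/-- If the `Γ`-equivariant continuous hermitian metric `h` is
right-`K`-invariant for a compact subgroup `K`, then right translation by each `k ∈ K`
is an isometry for the `L²`-norm of continuous `Γ`-equivariant functions. -/
theorem right_translation_by_compact_subgroup_isometric
    {G V : Type*} [Group G] [TopologicalSpace G] [IsTopologicalGroup G]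
    [LocallyCompactSpace G] [T2Space G] [SecondCountableTopology G]
    [MeasurableSpace G] [BorelSpace G] (μ : Measure G)
    [μ.IsHaarMeasure] [μ.IsMulRightInvariant]
    [NormedAddCommGroup V] [NormedSpace ℂ V] [FiniteDimensional ℂ V] [Nontrivial V]
    (Γ : Subgroup G) [DiscreteTopology Γ]
    (hcocompact : ∃ C : Set G, IsCompact C ∧ ∀ g : G, ∃ γ ∈ Γ, γ * g ∈ C)
    (χ : Γ →* (V →ₗ[ℂ] V)ˣ)
    (K : Subgroup G) (hK : IsCompact (K : Set G))
    (h : G → V → V → ℂ) (hh : IsEquivariantHermitianMetric Γ χ h)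
    (hKinv : ∀ (g : G), ∀ k ∈ K, ∀ (v w : V), h (g * k) v w = h g v w)
    (F : Set G) (hF : IsFundamentalDomain Γ F μ) :
    ∀ k ∈ K, ∀ f : G → V, Continuous f →
      (∀ (γ : Γ) (x : G), f ((γ : G) * x) = (χ γ : V →ₗ[ℂ] V) (f x)) →
      (∫ x in F, (h x (f (x * k)) (f (x * k))).re ∂μ) =
        ∫ x in F, (h x (f x) (f x)).re ∂μ := by
  intro k hk f hfc hfe
  haveI : Countable Γ := TopologicalSpace.separableSpace_iff_countable.mp inferInstance
  have hint : ∀ x : G, (h x (f (x * k)) (f (x * k))).re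
      = (fun y => (h y (f y) (f y)).re) (x * k) := by
    intro x
    simp only
    rw [hKinv x k hk]
  have hφinv : ∀ (γ : Γ) (x : G),
      (fun y => (h y (f y) (f y)).re) (γ • x) = (fun y => (h y (f y) (f y)).re) x := by
    intro γ x
    show (h ((γ : G) * x) (f ((γ : G) * x)) (f ((γ : G) * x))).re = _
    rw [hfe, hh.2.2.2.2.2]
  have hmp : MeasurePreserving (fun x : G => x * k) μ μ :=
    measurePreserving_mul_right μ k
  have hemb : MeasurableEmbedding (fun x : G => x * k) :=
    (Homeomorph.mulRight k).toMeasurableEquiv.measurableEmbedding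
  have hF' : IsFundamentalDomain Γ ((Equiv.mulRight k) '' F) μ := by
    refine hF.image_of_equiv (Equiv.mulRight k) ?_ (Equiv.refl Γ) ?_
    · exact (measurePreserving_mul_right μ k⁻¹).quasiMeasurePreserving
    · intro γ x
      simp [Subgroup.smul_def, mul_assoc]
  calc ∫ x in F, (h x (f (x * k)) (f (x * k))).re ∂μ
      = ∫ x in F, (fun y => (h y (f y) (f y)).re) (x * k) ∂μ := by simp_rw [hint]
    _ = ∫ y in (fun x : G => x * k) '' F, (fun y => (h y (f y) (f y)).re) y ∂μ :=
        (hmp.setIntegral_image_emb hemb (fun y => (h y (f y) (f y)).re) F).symm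
    _ = ∫ x in F, (h x (f x) (f x)).re ∂μ := hF'.setIntegral_eq hF hφinv
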